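/- Let v₀ ∈ H^s(ℝⁿ) with s > 0 and suppose the decay character r*(v₀) exists. Then the decay character of Λ^s v₀ exists, satisfies -n/2 + s < r*(Λ^s v₀) < ∞, and r*(Λ^s v₀) = s + r*(v₀), where Λ = (-Δ)^{1/2}. -/

import Mathlib

/- STATEMENT 6: If v₀ ∈ H^s(ℝⁿ), s > 0, and the decay character r*(v₀) = r exists
   (i.e. the decay indicator at r has a finite positive limit P), then the decay
   character of Λ^s v₀ exists, -n/2 + s < r*(Λ^s v₀), and r*(Λ^s v₀) = s + r.
   On the Fourier side (Λ^s v₀)^(ξ) = |ξ|^s v̂₀(ξ); we formalize everything in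
   terms of v̂₀, with the H^s condition expressed as |ξ|^s v̂₀ ∈ L². -/

noncomputable section
open MeasureTheory Filter

/-- Auxiliary Cesàro-type lemma: if `g → P` as `ρ → 0⁺`, then the weighted averages
`ρ^(-α) ∫_0^ρ t^(α-1) g t dt` tend to `P/α`. -/
lemma my_cesaro (α P ρ₀ : ℝ) (hα : 0 < α) (hρ₀ : 0 < ρ₀) (g : ℝ → ℝ)
    (hint : IntegrableOn (fun t => t ^ (α - 1) * g t) (Set.Ioc 0 ρ₀) volume)
    (hg : Tendsto g (nhdsWithin 0 (Set.Ioi 0)) (nhds P)) :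
    Tendsto (fun ρ => ρ ^ (-α) * ∫ t in Set.Ioc 0 ρ, t ^ (α - 1) * g t)
      (nhdsWithin 0 (Set.Ioi 0)) (nhds (P / α)) := by
  have hpow : ∀ ρ : ℝ, 0 < ρ → ∫ t in Set.Ioc 0 ρ, t ^ (α - 1) = ρ ^ α / α := by
    intro ρ hρ
    rw [← intervalIntegral.integral_of_le hρ.le, integral_rpow (Or.inl (by linarith)),
      Real.zero_rpow (by linarith), sub_zero, sub_add_cancel]
  rw [Metric.tendsto_nhdsWithin_nhds] at hg ⊢
  intro ε hε
  have hε' : 0 < ε * α / 2 := by positivity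
  obtain ⟨δ₁, hδ₁, hδ⟩ := hg (ε * α / 2) hε'
  refine ⟨min δ₁ ρ₀, lt_min hδ₁ hρ₀, fun {ρ} hρmem hρd => ?_⟩
  have hρ : 0 < ρ := hρmem
  rw [Real.dist_eq, sub_zero, abs_of_pos hρ] at hρd
  have hρδ₁ : ρ < δ₁ := lt_of_lt_of_le hρd (min_le_left _ _)
  have hρρ₀ : ρ ≤ ρ₀ := le_of_lt (lt_of_lt_of_le hρd (min_le_right _ _))
  have I1 : IntegrableOn (fun t => t ^ (α - 1) * g t) (Set.Ioc 0 ρ) volume :=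
    hint.mono_set (Set.Ioc_subset_Ioc_right hρρ₀)
  have Irpow : IntegrableOn (fun t : ℝ => t ^ (α - 1)) (Set.Ioc 0 ρ) volume :=
    (intervalIntegral.intervalIntegrable_rpow' (by linarith)).1
  have I2 : IntegrableOn (fun t : ℝ => t ^ (α - 1) * P) (Set.Ioc 0 ρ) volume :=
    Irpow.mul_const P
  have hρα : (0:ℝ) < ρ ^ α := Real.rpow_pos_of_pos hρ α
  have hρinv : ρ ^ (-α) = (ρ ^ α)⁻¹ := Real.rpow_neg hρ.le α
  -- key bound
  have hbound : |∫ t in Set.Ioc 0 ρ, (t ^ (α - 1) * g t - t ^ (α - 1) * P)|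
      ≤ (ε * α / 2) * (ρ ^ α / α) := by
    have h1 : |∫ t in Set.Ioc 0 ρ, (t ^ (α - 1) * g t - t ^ (α - 1) * P)|
        ≤ ∫ t in Set.Ioc 0 ρ, |t ^ (α - 1) * g t - t ^ (α - 1) * P| := by
      simpa [Real.norm_eq_abs] using
        norm_integral_le_integral_norm (μ := volume.restrict (Set.Ioc 0 ρ))
          (fun t => t ^ (α - 1) * g t - t ^ (α - 1) * P)
    have h2 : ∫ t in Set.Ioc 0 ρ, |t ^ (α - 1) * g t - t ^ (α - 1) * P|
        ≤ ∫ t in Set.Ioc 0 ρ, t ^ (α - 1) * (ε * α / 2) := by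
      refine setIntegral_mono_on (I1.sub I2).abs (Irpow.mul_const _)
        measurableSet_Ioc (fun t ht => ?_)
      rw [← mul_sub, abs_mul, abs_of_nonneg (Real.rpow_nonneg ht.1.le _)]
      refine mul_le_mul_of_nonneg_left ?_ (Real.rpow_nonneg ht.1.le _)
      have := hδ (show t ∈ Set.Ioi (0:ℝ) from ht.1)
        (by rw [Real.dist_eq, sub_zero, abs_of_pos ht.1]
            exact lt_of_le_of_lt ht.2 (lt_of_lt_of_le hρd (min_le_left _ _)))
      rw [Real.dist_eq] at this
      exact this.le
    calc _ ≤ _ := h1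
      _ ≤ _ := h2
      _ = (ε * α / 2) * (ρ ^ α / α) := by
          rw [integral_mul_const, hpow ρ hρ, mul_comm]
  have hsplit : ∫ t in Set.Ioc 0 ρ, t ^ (α - 1) * g t
      = (∫ t in Set.Ioc 0 ρ, (t ^ (α - 1) * g t - t ^ (α - 1) * P)) + P * (ρ ^ α / α) := by
    rw [integral_sub I1 I2, integral_mul_const, hpow ρ hρ]; ring
  rw [Real.dist_eq, hsplit]
  have hcancel : ρ ^ (-α) * (P * (ρ ^ α / α)) = P / α := by
    rw [hρinv]; field_simp
  rw [mul_add, hcancel, add_sub_cancel_right, abs_mul,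
    abs_of_nonneg (by positivity : (0:ℝ) ≤ ρ ^ (-α))]
  calc ρ ^ (-α) * |∫ t in Set.Ioc 0 ρ, (t ^ (α - 1) * g t - t ^ (α - 1) * P)|
      ≤ ρ ^ (-α) * ((ε * α / 2) * (ρ ^ α / α)) := by
        exact mul_le_mul_of_nonneg_left hbound (by positivity)
    _ = ε / 2 := by rw [hρinv]; field_simp
    _ < ε := by linarith

theorem decay_character_fractional_laplacian (n : ℕ) (hn : 0 < n)
    (s : ℝ) (hs : 0 < s)
    (v0hat : EuclideanSpace ℝ (Fin n) → ℂ)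
    (hL2 : MemLp v0hat 2 volume)
    (hHs : MemLp (fun ξ : EuclideanSpace ℝ (Fin n) => ‖ξ‖ ^ s * ‖v0hat ξ‖) 2 volume)
    (r P : ℝ) (hr : -((n : ℝ) / 2) < r) (hP : 0 < P)
    (hlim : Tendsto
      (fun ρ : ℝ => ρ ^ (-2 * r - (n : ℝ)) *
        ∫ ξ in Metric.closedBall (0 : EuclideanSpace ℝ (Fin n)) ρ, ‖v0hat ξ‖ ^ 2)
      (nhdsWithin 0 (Set.Ioi 0)) (nhds P)) :
    -((n : ℝ) / 2) + s < s + r ∧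
    ∃ Q : ℝ, 0 < Q ∧
      Tendsto
        (fun ρ : ℝ => ρ ^ (-2 * (s + r) - (n : ℝ)) *
          ∫ ξ in Metric.closedBall (0 : EuclideanSpace ℝ (Fin n)) ρ,
            ‖(‖ξ‖ ^ s : ℝ) * ‖v0hat ξ‖‖ ^ 2)
        (nhdsWithin 0 (Set.Ioi 0)) (nhds Q) := by
  have hn' : (0:ℝ) < n := by exact_mod_cast hn
  have h2rn : (0:ℝ) < 2 * r + n := by linarith
  refine ⟨by linarith, ?_⟩
  haveI : Nonempty (Fin n) := ⟨⟨0, hn⟩⟩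
  haveI : Nontrivial (EuclideanSpace ℝ (Fin n)) := by
    infer_instance
  set α : ℝ := 2 * (s + r) + n with hαdef
  have hα : 0 < α := by rw [hαdef]; linarith
  -- measurable nonnegative representative of ‖v0hat ξ‖²
  have hfm : AEMeasurable (fun ξ : EuclideanSpace ℝ (Fin n) => ‖v0hat ξ‖ ^ 2) volume :=
    (hL2.1.norm.aemeasurable.pow_const 2)
  set h0 : EuclideanSpace ℝ (Fin n) → ℝ := fun ξ => max (hfm.mk _ ξ) 0 with h0def
  have h0_meas : Measurable h0 := hfm.measurable_mk.max measurable_const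
  have h0_nn : ∀ ξ, 0 ≤ h0 ξ := fun ξ => le_max_right _ _
  have h0_ae : (fun ξ : EuclideanSpace ℝ (Fin n) => ‖v0hat ξ‖ ^ 2) =ᵐ[volume] h0 := by
    filter_upwards [hfm.ae_eq_mk] with ξ hξ
    rw [h0def]; simp only
    rw [← hξ]
    exact (max_eq_left (by positivity)).symm
  have hInt : Integrable h0 volume := (hL2.norm.integrable_sq).congr h0_ae
  -- the cumulative mass function F
  set F : ℝ → ℝ := fun u => ∫ ξ in Metric.closedBall (0 : EuclideanSpace ℝ (Fin n)) u, h0 ξ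
    with hFdef
  have hF_eq : ∀ u : ℝ,
      (∫ ξ in Metric.closedBall (0 : EuclideanSpace ℝ (Fin n)) u, ‖v0hat ξ‖ ^ 2) = F u :=
    fun u => integral_congr_ae (ae_restrict_of_ae h0_ae)
  have hF_nn : ∀ u, 0 ≤ F u := fun u =>
    setIntegral_nonneg measurableSet_closedBall (fun ξ _ => h0_nn ξ)
  have hF_mono : Monotone F := fun u v huv =>
    setIntegral_mono_set hInt.integrableOn (ae_of_all _ h0_nn)
      (HasSubset.Subset.eventuallyLE (Metric.closedBall_subset_closedBall huv))
  have hF_meas : Measurable F := hF_mono.measurable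
  -- the normalized function g
  set gfun : ℝ → ℝ := fun u => u ^ (-2 * r - (n:ℝ)) * F u with hgdef
  have hglim : Tendsto gfun (nhdsWithin 0 (Set.Ioi 0)) (nhds P) :=
    hlim.congr (fun ρ => by rw [hgdef]; simp only; rw [hF_eq])
  have hFg : ∀ u : ℝ, 0 < u → F u = u ^ (2 * r + (n:ℝ)) * gfun u := by
    intro u hu
    rw [hgdef]; simp only
    rw [← mul_assoc, ← Real.rpow_add hu]
    have : 2 * r + (n:ℝ) + (-2 * r - n) = 0 := by ring
    rw [this, Real.rpow_zero, one_mul]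
  -- pointwise identity for the squared integrand
  have hpt : ∀ ξ : EuclideanSpace ℝ (Fin n),
      (‖ξ‖ ^ s * ‖v0hat ξ‖) ^ 2 = ‖ξ‖ ^ (2 * s) * ‖v0hat ξ‖ ^ 2 := by
    intro ξ
    rw [mul_pow]
    congr 1
    rw [← Real.rpow_natCast (‖ξ‖ ^ s) 2, ← Real.rpow_mul (norm_nonneg ξ)]
    norm_num [mul_comm]
  have hG_int : Integrable
      (fun ξ : EuclideanSpace ℝ (Fin n) => ‖ξ‖ ^ (2 * s) * h0 ξ) volume := by
    refine (hHs.integrable_sq).congr ?_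
    filter_upwards [h0_ae] with ξ hξ
    rw [← hξ, hpt ξ]
  set G : ℝ → ℝ := fun ρ =>
    ∫ ξ in Metric.closedBall (0 : EuclideanSpace ℝ (Fin n)) ρ, ‖ξ‖ ^ (2 * s) * h0 ξ with hGdef
  have hG_eq : ∀ ρ : ℝ,
      (∫ ξ in Metric.closedBall (0 : EuclideanSpace ℝ (Fin n)) ρ,
        ‖(‖ξ‖ ^ s : ℝ) * ‖v0hat ξ‖‖ ^ 2) = G ρ := by
    intro ρ
    refine integral_congr_ae (ae_restrict_of_ae ?_)
    filter_upwards [h0_ae] with ξ hξ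
    rw [Real.norm_of_nonneg (mul_nonneg (Real.rpow_nonneg (norm_nonneg ξ) s) (norm_nonneg _)),
      hpt ξ, hξ]
  have hG_nn : ∀ ρ, 0 ≤ G ρ := fun ρ =>
    setIntegral_nonneg measurableSet_closedBall
      (fun ξ _ => mul_nonneg (Real.rpow_nonneg (norm_nonneg ξ) _) (h0_nn ξ))
  -- ball vs closed ball
  have hball : ∀ u : ℝ,
      (Metric.ball (0 : EuclideanSpace ℝ (Fin n)) u : Set (EuclideanSpace ℝ (Fin n)))
        =ᵐ[volume] Metric.closedBall 0 u := by
    intro u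
    refine MeasureTheory.ae_eq_set.mpr ⟨?_, ?_⟩
    · simp [Set.diff_eq_empty.mpr Metric.ball_subset_closedBall]
    · rw [Metric.closedBall_diff_ball]
      exact Measure.addHaar_sphere volume 0 u
  -- primitve of 2s t^(2s-1)
  have hGprim : ∀ x : ℝ, 0 ≤ x →
      (∫ t in (0:ℝ)..x, 2 * s * t ^ (2 * s - 1)) = x ^ (2 * s) := by
    intro x hx
    rw [intervalIntegral.integral_const_mul,
      integral_rpow (Or.inl (by linarith : (-1:ℝ) < 2 * s - 1)), sub_add_cancel,
      Real.zero_rpow (by linarith : (2:ℝ) * s ≠ 0), sub_zero]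
    field_simp
  -- integrability of the weight on Ioc
  have hrw_int : ∀ ρ : ℝ, IntegrableOn (fun t : ℝ => 2 * s * t ^ (2 * s - 1))
      (Set.Ioc 0 ρ) volume := fun ρ =>
    ((intervalIntegral.intervalIntegrable_rpow' (by linarith : (-1:ℝ) < 2 * s - 1)).const_mul
      (2 * s)).1
  have hFt_int : ∀ ρ : ℝ, IntegrableOn (fun t : ℝ => F t * (2 * s * t ^ (2 * s - 1)))
      (Set.Ioc 0 ρ) volume := by
    intro ρ
    refine Integrable.mono ((hrw_int ρ).const_mul (F ρ))
      ((hF_meas.mul (by fun_prop)).aestronglyMeasurable) ?_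
    rw [ae_restrict_iff' measurableSet_Ioc]
    refine ae_of_all _ (fun t ht => ?_)
    have hw : 0 ≤ 2 * s * t ^ (2 * s - 1) :=
      mul_nonneg (by linarith) (Real.rpow_nonneg ht.1.le _)
    rw [Real.norm_eq_abs, Real.norm_eq_abs, abs_of_nonneg (mul_nonneg (hF_nn t) hw),
      abs_of_nonneg (mul_nonneg (hF_nn ρ) hw)]
    exact mul_le_mul_of_nonneg_right (hF_mono ht.2) hw
  have hFsub_int : ∀ ρ : ℝ, IntegrableOn
      (fun t : ℝ => (F ρ - F t) * (2 * s * t ^ (2 * s - 1))) (Set.Ioc 0 ρ) volume := by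
    intro ρ
    have h := ((hrw_int ρ).const_mul (F ρ)).sub (hFt_int ρ)
    simp only [sub_mul]
    exact h
  -- THE KEY LAYER-CAKE IDENTITY
  have hkey : ∀ ρ : ℝ, 0 < ρ →
      G ρ = F ρ * ρ ^ (2 * s) - ∫ t in Set.Ioc 0 ρ, F t * (2 * s * t ^ (2 * s - 1)) := by
    intro ρ hρ
    set B := Metric.closedBall (0 : EuclideanSpace ℝ (Fin n)) ρ with hBdef
    set μ : Measure (EuclideanSpace ℝ (Fin n)) :=
      (volume.restrict B).withDensity (fun ξ => ENNReal.ofReal (h0 ξ)) with hμdef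
    have layer := lintegral_comp_eq_lintegral_meas_le_mul_of_measurable μ
      (f := fun ξ => ‖ξ‖) (g := fun t => 2 * s * t ^ (2 * s - 1))
      (fun ξ => norm_nonneg ξ) measurable_norm
      (fun t _ => (intervalIntegral.intervalIntegrable_rpow'
        (by linarith : (-1:ℝ) < 2 * s - 1)).const_mul (2 * s))
      (by fun_prop)
      (fun t ht => mul_nonneg (by linarith) (Real.rpow_nonneg ht.le _))
    -- LHS of layer cake
    have hLHS : (∫⁻ ω, ENNReal.ofReal (∫ t in (0:ℝ)..‖ω‖, 2 * s * t ^ (2 * s - 1)) ∂μ)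
        = ENNReal.ofReal (G ρ) := by
      have e1 : (∫⁻ ω, ENNReal.ofReal (∫ t in (0:ℝ)..‖ω‖, 2 * s * t ^ (2 * s - 1)) ∂μ)
          = ∫⁻ ω, ENNReal.ofReal (‖ω‖ ^ (2 * s)) ∂μ :=
        lintegral_congr (fun ω => by rw [hGprim _ (norm_nonneg ω)])
      rw [e1, hμdef,
        lintegral_withDensity_eq_lintegral_mul _ (h0_meas.ennreal_ofReal) (by fun_prop)]
      have e2 : ∫⁻ ξ in B, (((fun x => ENNReal.ofReal (h0 x)) *
            fun ω => ENNReal.ofReal (‖ω‖ ^ (2 * s))) :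
              EuclideanSpace ℝ (Fin n) → ENNReal) ξ
          = ∫⁻ ξ in B, ENNReal.ofReal (‖ξ‖ ^ (2 * s) * h0 ξ) := by
        refine lintegral_congr (fun ξ => ?_)
        simp only [Pi.mul_apply]
        rw [← ENNReal.ofReal_mul (h0_nn ξ), mul_comm]
      rw [e2, ← ofReal_integral_eq_lintegral_ofReal hG_int.integrableOn
        (ae_of_all _ (fun ξ => mul_nonneg (Real.rpow_nonneg (norm_nonneg ξ) _) (h0_nn ξ)))]
    -- measure of superlevel sets
    have hmeasset : ∀ t : ℝ, μ {a | t ≤ ‖a‖}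
        = ENNReal.ofReal (∫ ξ in {a : EuclideanSpace ℝ (Fin n) | t ≤ ‖a‖} ∩ B, h0 ξ) := by
      intro t
      have hSm : MeasurableSet {a : EuclideanSpace ℝ (Fin n) | t ≤ ‖a‖} :=
        measurableSet_le measurable_const measurable_norm
      rw [hμdef, withDensity_apply _ hSm, Measure.restrict_restrict hSm,
        ← ofReal_integral_eq_lintegral_ofReal
          (hInt.integrableOn) (ae_of_all _ h0_nn)]
    -- RHS of layer cake
    have hRHS : (∫⁻ t in Set.Ioi 0, μ {a | t ≤ ‖a‖} * ENNReal.ofReal (2 * s * t ^ (2 * s - 1)))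
        = ENNReal.ofReal
            (∫ t in Set.Ioc 0 ρ, (F ρ - F t) * (2 * s * t ^ (2 * s - 1))) := by
      rw [← Set.Ioc_union_Ioi_eq_Ioi hρ.le,
        lintegral_union measurableSet_Ioi Set.Ioc_disjoint_Ioi_same]
      have htail : (∫⁻ t in Set.Ioi ρ,
          μ {a | t ≤ ‖a‖} * ENNReal.ofReal (2 * s * t ^ (2 * s - 1))) = 0 := by
        rw [setLIntegral_congr_fun measurableSet_Ioi (fun t ht => ?_),
          lintegral_zero]
        have hempty : {a : EuclideanSpace ℝ (Fin n) | t ≤ ‖a‖} ∩ B = ∅ := by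
          ext a
          simp only [Set.mem_inter_iff, Set.mem_setOf_eq, hBdef, Metric.mem_closedBall,
            dist_zero_right, Set.mem_empty_iff_false, iff_false, not_and]
          intro hta hra
          exact absurd (le_trans hta hra) (not_le.mpr ht)
        rw [hmeasset t, hempty]
        simp
      rw [htail, add_zero]
      have hmain : ∀ t ∈ Set.Ioc (0:ℝ) ρ,
          μ {a | t ≤ ‖a‖} * ENNReal.ofReal (2 * s * t ^ (2 * s - 1))
            = ENNReal.ofReal ((F ρ - F t) * (2 * s * t ^ (2 * s - 1))) := by
        intro t ht
        have hset : {a : EuclideanSpace ℝ (Fin n) | t ≤ ‖a‖} ∩ B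
            = B \ Metric.ball 0 t := by
          ext a
          simp only [Set.mem_inter_iff, Set.mem_setOf_eq, Set.mem_diff, hBdef,
            Metric.mem_closedBall, Metric.mem_ball, dist_zero_right, not_lt]
          tauto
        have hsub : Metric.ball (0 : EuclideanSpace ℝ (Fin n)) t ⊆ B :=
          Metric.ball_subset_closedBall.trans (Metric.closedBall_subset_closedBall ht.2)
        have hdiff : ∫ ξ in {a : EuclideanSpace ℝ (Fin n) | t ≤ ‖a‖} ∩ B, h0 ξ
            = F ρ - F t := by
          rw [hset, integral_diff Metric.isOpen_ball.measurableSet hInt.integrableOn hsub]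
          congr 1
          rw [setIntegral_congr_set (hball t)]
        rw [hmeasset t, hdiff, ← ENNReal.ofReal_mul (by linarith [hF_mono ht.2]
          : (0:ℝ) ≤ F ρ - F t)]
      rw [setLIntegral_congr_fun measurableSet_Ioc hmain,
        ← ofReal_integral_eq_lintegral_ofReal (hFsub_int ρ) ?_]
      filter_upwards [self_mem_ae_restrict (measurableSet_Ioc : MeasurableSet (Set.Ioc (0:ℝ) ρ))]
        with t ht
      exact mul_nonneg (by linarith [hF_mono ht.2])
        (mul_nonneg (by linarith) (Real.rpow_nonneg ht.1.le _))
    rw [hLHS, hRHS] at layer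
    have hGsplit : (∫ t in Set.Ioc 0 ρ, (F ρ - F t) * (2 * s * t ^ (2 * s - 1)))
        = F ρ * ρ ^ (2 * s) - ∫ t in Set.Ioc 0 ρ, F t * (2 * s * t ^ (2 * s - 1)) := by
      simp only [sub_mul]
      rw [integral_sub ((hrw_int ρ).const_mul (F ρ)) (hFt_int ρ), integral_const_mul]
      congr 2
      rw [← intervalIntegral.integral_of_le hρ.le]
      exact hGprim ρ hρ.le
    have hint_nn : 0 ≤ ∫ t in Set.Ioc 0 ρ, (F ρ - F t) * (2 * s * t ^ (2 * s - 1)) := by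
      refine setIntegral_nonneg measurableSet_Ioc (fun t ht => ?_)
      exact mul_nonneg (by linarith [hF_mono ht.2])
        (mul_nonneg (by linarith) (Real.rpow_nonneg ht.1.le _))
    have := (ENNReal.ofReal_eq_ofReal_iff (hG_nn ρ) hint_nn).mp layer
    rw [this, hGsplit]
  have hpow_comb : ∀ t : ℝ, 0 < t → t ^ (α - 1) * gfun t = F t * t ^ (2 * s - 1) := by
    intro t ht
    rw [hgdef]; simp only
    rw [← mul_assoc, ← Real.rpow_add ht,
      show α - 1 + (-2 * r - (n:ℝ)) = 2 * s - 1 by rw [hαdef]; ring]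
    ring
  -- integrability for cesàro
  have hint_ces : IntegrableOn (fun t => t ^ (α - 1) * gfun t) (Set.Ioc 0 1) volume := by
    have base : IntegrableOn (fun t : ℝ => F t * (2 * s * t ^ (2 * s - 1)))
        (Set.Ioc 0 1) volume := hFt_int 1
    have base' : IntegrableOn (fun t : ℝ => (2 * s)⁻¹ * (F t * (2 * s * t ^ (2 * s - 1))))
        (Set.Ioc 0 1) volume := base.const_mul _
    refine base'.congr_fun (fun t ht => ?_) measurableSet_Ioc
    rw [hpow_comb t ht.1]
    have h2s : (2 * s) ≠ 0 := by linarith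
    field_simp
  have hces := my_cesaro α P 1 hα one_pos gfun hint_ces hglim
  -- assemble
  refine ⟨P - 2 * s * (P / α), ?_, ?_⟩
  · have : P - 2 * s * (P / α) = P * ((2 * r + n) / α) := by
      field_simp
      ring
    rw [this]
    exact mul_pos hP (div_pos h2rn hα)
  · have htend : Tendsto (fun ρ => gfun ρ - 2 * s *
        (ρ ^ (-α) * ∫ t in Set.Ioc 0 ρ, t ^ (α - 1) * gfun t))
        (nhdsWithin 0 (Set.Ioi 0)) (nhds (P - 2 * s * (P / α))) :=
      hglim.sub (hces.const_mul (2 * s))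
    refine htend.congr' ?_
    filter_upwards [self_mem_nhdsWithin] with ρ hρmem
    have hρ : 0 < ρ := hρmem
    rw [hG_eq ρ, hkey ρ hρ]
    have hI_eq : (∫ t in Set.Ioc 0 ρ, F t * (2 * s * t ^ (2 * s - 1)))
        = 2 * s * ∫ t in Set.Ioc 0 ρ, t ^ (α - 1) * gfun t := by
      rw [← integral_const_mul]
      refine setIntegral_congr_fun measurableSet_Ioc (fun t ht => ?_)
      rw [hpow_comb t ht.1]
      ring
    have hexp : -2 * (s + r) - (n:ℝ) = -α := by rw [hαdef]; ring
    rw [hexp, hI_eq, mul_sub]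
    congr 1
    · rw [hgdef]; simp only
      rw [show -2 * r - (n:ℝ) = -α + 2 * s by rw [hαdef]; ring, Real.rpow_add hρ]
      ring
    · ring
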